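/- arXiv:1606.00901 — 2 statements merged into one kernel-verified Lean document; each statement's English description precedes it below -/
import Mathlib

section
/- For λ > 0, τ > 0 and r ∈ ℝ, the integral ∫_{0}^{∞} λ·exp(-λx) · exp(-(x - r)²/(2τ)) dx equals λ·√(πτ/2) · erfcx( -(r - λτ)/√(2τ) ) · exp(-r²/(2τ)), where erfcx(t) = exp(t²)·erfc(t) is the scaled complementary error function. -/
open MeasureTheory Set

/-- The complementary error function `erfc t = (2/√π) ∫_t^∞ exp(-s²) ds`. -/
noncomputable def erfc (t : ℝ) : ℝ :=
  (2 / Real.sqrt Real.pi) * ∫ s in Set.Ioi t, Real.exp (-s ^ 2)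

/-- The scaled complementary error function `erfcx t = exp(t²)·erfc t`. -/
noncomputable def erfcx (t : ℝ) : ℝ := Real.exp (t ^ 2) * erfc t

lemma my_integral_comp_add_right_Ioi (g : ℝ → ℝ) (a c : ℝ) :
    (∫ x in Ioi a, g (x + c)) = ∫ x in Ioi (a + c), g x := by
  rw [← integral_indicator measurableSet_Ioi, ← integral_indicator measurableSet_Ioi,
    ← integral_add_right_eq_self (fun x => (Ioi (a + c)).indicator g x) c]
  congr 1
  ext x
  simp [Set.indicator_apply]

/-- Exponential–Gaussian integral for the Bernoulli-Exponential mixture channel. -/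
theorem exponential_gaussian_integral
    (lam tau r : ℝ) (hlam : 0 < lam) (htau : 0 < tau) :
    ∫ x in Set.Ioi (0 : ℝ),
        lam * Real.exp (-lam * x) * Real.exp (-(x - r) ^ 2 / (2 * tau)) =
      lam * Real.sqrt (Real.pi * tau / 2) *
        erfcx (-(r - lam * tau) / Real.sqrt (2 * tau)) * Real.exp (-r ^ 2 / (2 * tau)) := by
  set σ := Real.sqrt (2 * tau) with hσdef
  have h2t : (0:ℝ) < 2 * tau := by linarith
  have hσ : 0 < σ := Real.sqrt_pos.mpr h2t
  have hσ2 : σ ^ 2 = 2 * tau := Real.sq_sqrt h2t.le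
  set m := r - lam * tau with hm
  -- complete the square pointwise
  have key : ∀ x : ℝ, lam * Real.exp (-lam * x) * Real.exp (-(x - r) ^ 2 / (2 * tau))
      = (lam * Real.exp (lam ^ 2 * tau / 2 - lam * r)) * Real.exp (-((x + -m) / σ) ^ 2) := by
    intro x
    rw [mul_assoc, ← Real.exp_add, mul_assoc, ← Real.exp_add]
    congr 2
    have hx : ((x + -m) / σ) ^ 2 = (x - m) ^ 2 / (2 * tau) := by
      rw [div_pow, hσ2]; ring_nf
    rw [hx, hm]
    field_simp
    ring
  rw [MeasureTheory.setIntegral_congr_fun measurableSet_Ioi (fun x _ => key x),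
    MeasureTheory.integral_const_mul,
    my_integral_comp_add_right_Ioi (fun y => Real.exp (-(y / σ) ^ 2)) 0 (-m), zero_add]
  have hcv : (∫ x in Ioi (-m), Real.exp (-(x / σ) ^ 2))
      = σ * ∫ s in Ioi (-m / σ), Real.exp (-s ^ 2) := by
    have h := MeasureTheory.integral_comp_mul_left_Ioi (fun s => Real.exp (-s ^ 2)) (-m)
      (inv_pos.mpr hσ)
    simp only [smul_eq_mul, inv_inv] at h
    calc (∫ x in Ioi (-m), Real.exp (-(x / σ) ^ 2))
        = ∫ x in Ioi (-m), Real.exp (-(σ⁻¹ * x) ^ 2) := by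
          apply setIntegral_congr_fun measurableSet_Ioi
          intro x _; simp [div_eq_inv_mul]
      _ = σ * ∫ s in Ioi (σ⁻¹ * -m), Real.exp (-s ^ 2) := h
      _ = σ * ∫ s in Ioi (-m / σ), Real.exp (-s ^ 2) := by
          rw [inv_mul_eq_div, neg_div]
  rw [hcv]
  have hπ : (0:ℝ) < Real.sqrt Real.pi := Real.sqrt_pos.mpr Real.pi_pos
  have herf : (∫ s in Ioi (-m / σ), Real.exp (-s ^ 2))
      = Real.sqrt Real.pi / 2 * erfc (-m / σ) := by
    rw [erfc]; field_simp
  have hconst : Real.sqrt (Real.pi * tau / 2) = σ * Real.sqrt Real.pi / 2 := by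
    rw [hσdef, ← Real.sqrt_mul h2t.le,
      show 2 * tau * Real.pi = 2 ^ 2 * (Real.pi * tau / 2) by ring,
      Real.sqrt_mul (by positivity), Real.sqrt_sq (by norm_num)]
    ring
  have hexp : Real.exp (lam ^ 2 * tau / 2 - lam * r)
      = Real.exp ((-m / σ) ^ 2) * Real.exp (-r ^ 2 / (2 * tau)) := by
    rw [← Real.exp_add]
    congr 1
    have : (-m / σ) ^ 2 = m ^ 2 / (2 * tau) := by rw [div_pow, hσ2]; ring_nf
    rw [this, hm]
    field_simp
    ring
  rw [herf, hconst, erfcx, hexp]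
  ring
end

section
/- For λ > 0, τ > 0 and r ∈ ℝ, ∫_{-∞}^{∞} (λ/2)·exp(-λ|x|) · exp(-(x - r)²/(2τ)) dx = (1/2)·exp(-r²/(2τ)) · [ λ·√(πτ/2)·erfcx( -(r - λτ)/√(2τ) ) + λ·√(πτ/2)·erfcx( (r + λτ)/√(2τ) ) ]. -/
open MeasureTheory Set Real

lemma gauss_tail (t : ℝ) :
    ∫ s in Set.Ioi t, Real.exp (-s ^ 2) = Real.sqrt Real.pi / 2 * erfc t := by
  have h : Real.sqrt Real.pi ≠ 0 := ne_of_gt (Real.sqrt_pos.mpr Real.pi_pos)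
  rw [erfc]
  field_simp

lemma gauss_Ioi (tau m : ℝ) (htau : 0 < tau) :
    ∫ x in Set.Ioi (0 : ℝ), Real.exp (-(x - m) ^ 2 / (2 * tau)) =
      Real.sqrt (2 * tau) * (Real.sqrt Real.pi / 2) * erfc (-m / Real.sqrt (2 * tau)) := by
  have h2t : (0 : ℝ) < 2 * tau := by linarith
  set c := Real.sqrt (2 * tau) with hc
  have hcpos : 0 < c := Real.sqrt_pos.mpr h2t
  have hc2 : c ^ 2 = 2 * tau := Real.sq_sqrt h2t.le
  have h1 : ∫ x in Set.Ioi (0 : ℝ), Real.exp (-(x - m) ^ 2 / (2 * tau)) =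
      ∫ y in Set.Ioi (-m), Real.exp (-y ^ 2 / (2 * tau)) := by
    have A : MeasurableEmbedding (fun x : ℝ => x + (-m)) :=
      (Homeomorph.addRight (-m)).isClosedEmbedding.measurableEmbedding
    have h := A.setIntegral_map (μ := volume)
      (fun y => Real.exp (-y ^ 2 / (2 * tau))) (Set.Ioi (-m))
    rw [map_add_right_eq_self volume (-m)] at h
    rw [h, Set.preimage_add_const_Ioi]
    norm_num [sub_eq_add_neg]
  have h2 : ∀ y : ℝ, Real.exp (-y ^ 2 / (2 * tau)) = Real.exp (-(c⁻¹ * y) ^ 2) := by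
    intro y
    congr 1
    rw [mul_pow]
    rw [inv_pow, hc2]
    field_simp
  rw [h1]
  simp_rw [h2]
  rw [integral_comp_mul_left_Ioi (fun s => Real.exp (-s ^ 2)) (-m) (inv_pos.mpr hcpos)]
  rw [gauss_tail]
  rw [smul_eq_mul, inv_inv]
  have : c⁻¹ * -m = -m / c := by ring
  rw [this]
  ring

lemma laplace_half (lam tau r : ℝ) (htau : 0 < tau) :
    ∫ x in Set.Ioi (0 : ℝ), Real.exp (-(lam * x)) * Real.exp (-(x - r) ^ 2 / (2 * tau)) =
      Real.exp (-r ^ 2 / (2 * tau)) *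
        (Real.sqrt (Real.pi * tau / 2) * erfcx (-(r - lam * tau) / Real.sqrt (2 * tau))) := by
  have h2t : (0 : ℝ) < 2 * tau := by linarith
  have key : ∀ x : ℝ, Real.exp (-(lam * x)) * Real.exp (-(x - r) ^ 2 / (2 * tau)) =
      Real.exp (((r - lam * tau) ^ 2 - r ^ 2) / (2 * tau)) *
        Real.exp (-(x - (r - lam * tau)) ^ 2 / (2 * tau)) := by
    intro x
    rw [← Real.exp_add, ← Real.exp_add]
    congr 1
    field_simp
    ring
  simp_rw [key]
  rw [integral_const_mul, gauss_Ioi tau (r - lam * tau) htau]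
  rw [erfcx]
  have ht2 : (-(r - lam * tau) / Real.sqrt (2 * tau)) ^ 2 = (r - lam * tau) ^ 2 / (2 * tau) := by
    rw [div_pow, Real.sq_sqrt h2t.le, neg_pow]
    ring
  have he : Real.exp (-r ^ 2 / (2 * tau)) *
      Real.exp ((-(r - lam * tau) / Real.sqrt (2 * tau)) ^ 2) =
      Real.exp (((r - lam * tau) ^ 2 - r ^ 2) / (2 * tau)) := by
    rw [← Real.exp_add, ht2]
    congr 1
    ring
  have hs : Real.sqrt (Real.pi * tau / 2) = Real.sqrt (2 * tau) * Real.sqrt Real.pi / 2 := by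
    rw [show Real.pi * tau / 2 = 2 * tau * Real.pi / 4 by ring]
    rw [Real.sqrt_div (by positivity) 4, Real.sqrt_mul h2t.le]
    norm_num [Real.sqrt_eq_iff_eq_sq]
  rw [hs, ← he]
  ring

/-- Laplace prior convolved with an unnormalized Gaussian kernel. -/
theorem laplace_gaussian_integral
    (lam tau r : ℝ) (hlam : 0 < lam) (htau : 0 < tau) :
    ∫ x : ℝ, (lam / 2) * Real.exp (-lam * |x|) * Real.exp (-(x - r) ^ 2 / (2 * tau)) =
      (1 / 2) * Real.exp (-r ^ 2 / (2 * tau)) *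
        (lam * Real.sqrt (Real.pi * tau / 2) *
            erfcx (-(r - lam * tau) / Real.sqrt (2 * tau)) +
          lam * Real.sqrt (Real.pi * tau / 2) *
            erfcx ((r + lam * tau) / Real.sqrt (2 * tau))) := by
  set f : ℝ → ℝ :=
    fun x => (lam / 2) * Real.exp (-lam * |x|) * Real.exp (-(x - r) ^ 2 / (2 * tau)) with hf
  have hint : Integrable f := by
    have hg : Integrable (fun x : ℝ =>
        (lam / 2) * Real.exp (-(1 / (2 * tau)) * (x - r) ^ 2)) :=
      ((integrable_exp_neg_mul_sq (by positivity)).comp_sub_right r).const_mul _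
    refine hg.mono ?_ ?_
    · apply Continuous.aestronglyMeasurable
      fun_prop
    · filter_upwards with x
      rw [Real.norm_eq_abs, Real.norm_eq_abs, abs_of_nonneg (by positivity),
        abs_of_nonneg (by positivity)]
      have h1 : Real.exp (-lam * |x|) ≤ 1 := by
        rw [Real.exp_le_one_iff]
        have : 0 ≤ |x| := abs_nonneg x
        nlinarith
      have h2 : -(x - r) ^ 2 / (2 * tau) = -(1 / (2 * tau)) * (x - r) ^ 2 := by ring
      rw [hf]
      simp only
      rw [h2]
      calc lam / 2 * Real.exp (-lam * |x|) * Real.exp (-(1 / (2 * tau)) * (x - r) ^ 2)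
          ≤ lam / 2 * 1 * Real.exp (-(1 / (2 * tau)) * (x - r) ^ 2) := by
            gcongr
        _ = lam / 2 * Real.exp (-(1 / (2 * tau)) * (x - r) ^ 2) := by ring
  have hIoi : ∫ x in Set.Ioi (0 : ℝ), f x =
      (lam / 2) * (Real.exp (-r ^ 2 / (2 * tau)) *
        (Real.sqrt (Real.pi * tau / 2) * erfcx (-(r - lam * tau) / Real.sqrt (2 * tau)))) := by
    rw [← laplace_half lam tau r htau, ← integral_const_mul]
    refine setIntegral_congr_fun measurableSet_Ioi (fun x hx => ?_)
    rw [hf]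
    simp only
    rw [abs_of_nonneg (le_of_lt hx)]
    ring_nf
  have hIic : ∫ x in Set.Iic (0 : ℝ), f x =
      (lam / 2) * (Real.exp (-(-r) ^ 2 / (2 * tau)) *
        (Real.sqrt (Real.pi * tau / 2) * erfcx (-(-r - lam * tau) / Real.sqrt (2 * tau)))) := by
    have hneg := integral_comp_neg_Ioi (0 : ℝ) f
    rw [neg_zero] at hneg
    rw [← hneg]
    rw [← laplace_half lam tau (-r) htau, ← integral_const_mul]
    refine setIntegral_congr_fun measurableSet_Ioi (fun x hx => ?_)
    rw [hf]
    simp only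
    rw [abs_neg, abs_of_nonneg (le_of_lt hx)]
    rw [show -x - r = -(x - -r) by ring, neg_pow (x - -r) 2]
    ring_nf
  have hsplit := intervalIntegral.integral_Iic_add_Ioi (b := (0 : ℝ))
    hint.integrableOn hint.integrableOn
  rw [← hsplit, hIic, hIoi]
  rw [show -(-r - lam * tau) = r + lam * tau by ring, neg_pow r 2]
  ring_nf
end
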